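/- Let N = n+1 be even with n ≥ 3, and let λ, λ' ∈ Λ_N. Then there exists an n×n integer matrix B such that either B or −B is a permutation matrix (in particular det B = ±1) and the image under x ↦ B x of the set {λ_1·(−(e_1 + ⋯ + e_n))} ∪ {λ_{i+1} e_i : 1 ≤ i ≤ n} equals the set {λ'_1·(−(e_1 + ⋯ + e_n))} ∪ {λ'_{i+1} e_i : 1 ≤ i ≤ n}; that is, any two facets F_λ, F_{λ'} of Q_N are unimodularly equivalent. -/

import Mathlib

open Finset

/-- `eVec n k` is the standard basis vector `e_k` of `ℝ^n` for `1 ≤ k ≤ n`,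
with the convention `e_0 = e_{n+1} = 0`. -/
noncomputable def eVec (n : ℕ) (k : ℕ) : Fin n → ℝ := fun t => if (t : ℕ) + 1 = k then 1 else 0

/-- Vertex set of the facet `F_λ` of `Q_N`:
`{λ_1 ⬝ (-(e_1 + ⋯ + e_n))} ∪ {λ_{i+1} e_i : 1 ≤ i ≤ n}`. -/
noncomputable def facetVerts (n : ℕ) (l : ℕ → ℝ) : Set (Fin n → ℝ) :=
  insert (l 1 • ((fun _ => (-1 : ℝ)) : Fin n → ℝ))
    {x | ∃ i ∈ Finset.Icc 1 n, x = l (i + 1) • eVec n i}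

open Classical in
lemma sum_pm {n : ℕ} (f : Fin n → ℝ) (hf : ∀ i, f i = 1 ∨ f i = -1) :
    (∑ i, f i) = 2 * ((univ.filter (fun i => f i = 1)).card : ℝ) - n := by
  rw [← Finset.sum_filter_add_sum_filter_not univ (fun i => f i = 1)]
  have h1 : ∑ i ∈ univ.filter (fun i => f i = 1), f i
      = ((univ.filter (fun i => f i = 1)).card : ℝ) := by
    rw [Finset.sum_congr rfl (fun i hi => (Finset.mem_filter.mp hi).2)]
    simp
  have h2 : ∑ i ∈ univ.filter (fun i => ¬ f i = 1), f i
      = -((univ.filter (fun i => ¬ f i = 1)).card : ℝ) := by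
    rw [Finset.sum_congr rfl (fun i hi => ((hf i).resolve_left (Finset.mem_filter.mp hi).2))]
    simp
  rw [h1, h2]
  have h3 : (univ.filter (fun i : Fin n => f i = 1)).card
      + (univ.filter (fun i => ¬ f i = 1)).card = n := by
    rw [Finset.card_filter_add_card_filter_not]; simp
  have h4 := congrArg (fun k : ℕ => (k : ℝ)) h3
  push_cast at h4
  linarith

lemma permMatrix_cast_mulVec {n : ℕ} (σ : Equiv.Perm (Fin n)) (v : Fin n → ℝ) (j : Fin n) :
    ((σ.permMatrix ℤ).map (fun z : ℤ => (z : ℝ))).mulVec v j = v (σ j) := by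
  simp [Matrix.mulVec, dotProduct, Equiv.Perm.permMatrix, PEquiv.toMatrix_apply,
    Equiv.toPEquiv_apply, Matrix.map_apply, apply_ite, eq_comm]

lemma facetVerts_eq (n : ℕ) (l : ℕ → ℝ) :
    facetVerts n l = insert (l 1 • ((fun _ => (-1 : ℝ)) : Fin n → ℝ))
      (Set.range (fun ι : Fin n => l ((ι : ℕ) + 2) • eVec n ((ι : ℕ) + 1))) := by
  unfold facetVerts
  congr 1
  ext x
  constructor
  · rintro ⟨i, hi, rfl⟩
    simp only [Finset.mem_Icc] at hi
    refine ⟨⟨i - 1, by omega⟩, ?_⟩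
    have h1 : i - 1 + 2 = i + 1 := by omega
    have h2 : i - 1 + 1 = i := by omega
    show l ((i - 1) + 2) • eVec n ((i - 1) + 1) = l (i + 1) • eVec n i
    rw [h1, h2]
  · rintro ⟨ι, rfl⟩
    exact ⟨(ι : ℕ) + 1, by simp [Finset.mem_Icc], rfl⟩

lemma image_facet {n : ℕ} (l l' : ℕ → ℝ) (ε : ℝ) (τ : Equiv.Perm (Fin n))
    (hτ : ∀ i : Fin n, l' ((τ i : ℕ) + 2) = ε * l ((i : ℕ) + 2))
    (hc : ε * l 1 = l' 1)
    (M : Matrix (Fin n) (Fin n) ℝ)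
    (hM : ∀ v : Fin n → ℝ, ∀ j : Fin n, M.mulVec v j = ε * v (τ⁻¹ j)) :
    M.mulVec '' facetVerts n l = facetVerts n l' := by
  have key : ∀ ι : Fin n,
      M.mulVec (l ((ι : ℕ) + 2) • eVec n ((ι : ℕ) + 1))
        = l' (((τ ι : Fin n) : ℕ) + 2) • eVec n (((τ ι : Fin n) : ℕ) + 1) := by
    intro ι
    funext j
    rw [hM]
    simp only [Pi.smul_apply, smul_eq_mul, eVec, hτ]
    by_cases h : j = τ ι
    · have h1 : ((τ⁻¹ j : Fin n) : ℕ) + 1 = (ι : ℕ) + 1 := by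
        rw [h]; simp
      have h2 : (j : ℕ) + 1 = ((τ ι : Fin n) : ℕ) + 1 := by rw [h]
      rw [if_pos h1, if_pos h2]
      ring
    · have h1 : ¬ ((τ⁻¹ j : Fin n) : ℕ) + 1 = (ι : ℕ) + 1 := by
        intro hcon
        apply h
        have : τ⁻¹ j = ι := Fin.ext (by omega)
        rw [← this]; simp
      have h2 : ¬ (j : ℕ) + 1 = ((τ ι : Fin n) : ℕ) + 1 := by
        intro hcon
        exact h (Fin.ext (by omega))
      rw [if_neg h1, if_neg h2]
      ring
  have keyc : M.mulVec (l 1 • ((fun _ => (-1 : ℝ)) : Fin n → ℝ))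
      = l' 1 • ((fun _ => (-1 : ℝ)) : Fin n → ℝ) := by
    funext j
    rw [hM]
    simp only [Pi.smul_apply, smul_eq_mul]
    calc ε * (l 1 * -1) = (ε * l 1) * -1 := by ring
    _ = l' 1 * -1 := by rw [hc]
  rw [facetVerts_eq, facetVerts_eq, Set.image_insert_eq, keyc, ← Set.range_comp]
  congr 1
  have : (M.mulVec ∘ fun ι : Fin n => l ((ι : ℕ) + 2) • eVec n ((ι : ℕ) + 1))
      = (fun ι : Fin n => l' ((ι : ℕ) + 2) • eVec n ((ι : ℕ) + 1)) ∘ τ := by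
    funext ι
    exact key ι
  rw [this, Set.range_comp, Equiv.range_eq_univ, Set.image_univ]

theorem stmt1 (n N : ℕ) (hn : 3 ≤ n) (hN : N = n + 1) (hNe : Even N)
    (l l' : ℕ → ℝ)
    (hl1 : ∀ i ∈ Finset.Icc 1 N, l i = 1 ∨ l i = -1)
    (hl2 : ∑ i ∈ Finset.Icc 1 N, l i = 0)
    (hl1' : ∀ i ∈ Finset.Icc 1 N, l' i = 1 ∨ l' i = -1)
    (hl2' : ∑ i ∈ Finset.Icc 1 N, l' i = 0) :
    ∃ B : Matrix (Fin n) (Fin n) ℤ,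
      (∃ σ : Equiv.Perm (Fin n), B = σ.permMatrix ℤ ∨ B = -(σ.permMatrix ℤ)) ∧
      (B.det = 1 ∨ B.det = -1) ∧
      (B.map (fun z : ℤ => (z : ℝ))).mulVec '' facetVerts n l = facetVerts n l' := by
  classical
  have h1N : (1 : ℕ) ∈ Finset.Icc 1 N := by simp [Finset.mem_Icc]; omega
  have hl1v := hl1 1 h1N
  have hl1v' := hl1' 1 h1N
  set ε : ℝ := l 1 * l' 1 with hε
  have hεpm : ε = 1 ∨ ε = -1 := by
    rcases hl1v with h | h <;> rcases hl1v' with h' | h' <;> simp [hε, h, h']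
  have hsq : l 1 * l 1 = 1 := by rcases hl1v with h | h <;> rw [h] <;> norm_num
  have hc : ε * l 1 = l' 1 := by
    calc ε * l 1 = (l 1 * l 1) * l' 1 := by rw [hε]; ring
    _ = l' 1 := by rw [hsq]; ring
  have hmem : ∀ i : Fin n, ((i : ℕ) + 2) ∈ Finset.Icc 1 N := by
    intro i
    have := i.isLt
    simp [Finset.mem_Icc]; omega
  -- sums
  have hsum : ∀ m : ℕ → ℝ, (∑ i ∈ Finset.Icc 1 N, m i) = m 1 + ∑ i : Fin n, m ((i : ℕ) + 2) := by
    intro m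
    have h1 : Finset.Icc 1 N = Finset.Ico 1 (n + 2) := by rw [hN, ← Finset.Ico_add_one_right_eq_Icc]; rfl
    rw [h1, Finset.sum_Ico_eq_sum_range]
    have h2 : n + 2 - 1 = n + 1 := by omega
    rw [h2, Finset.sum_range_succ']
    rw [Fin.sum_univ_eq_sum_range (fun i => m (i + 2))]
    have h3 : ∀ i ∈ Finset.range n, m (1 + (i + 1)) = m (i + 2) := by
      intro i _; congr 1; omega
    rw [Finset.sum_congr rfl h3]
    ring
  have hsl : ∑ i : Fin n, l ((i : ℕ) + 2) = - l 1 := by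
    have := hsum l; rw [hl2] at this; linarith
  have hsl' : ∑ i : Fin n, l' ((i : ℕ) + 2) = - l' 1 := by
    have := hsum l'; rw [hl2'] at this; linarith
  have hfp : ∀ i : Fin n, ε * l ((i : ℕ) + 2) = 1 ∨ ε * l ((i : ℕ) + 2) = -1 := by
    intro i
    rcases hεpm with h | h <;> rcases hl1 _ (hmem i) with h2 | h2 <;> simp [h, h2]
  have hfq : ∀ i : Fin n, l' ((i : ℕ) + 2) = 1 ∨ l' ((i : ℕ) + 2) = -1 :=
    fun i => hl1' _ (hmem i)
  have hsums : ∑ i : Fin n, ε * l ((i : ℕ) + 2) = ∑ i : Fin n, l' ((i : ℕ) + 2) := by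
    rw [← Finset.mul_sum, hsl, hsl', mul_neg, hc]
  have hcard : (univ.filter (fun i : Fin n => ε * l ((i : ℕ) + 2) = 1)).card
      = (univ.filter (fun i : Fin n => l' ((i : ℕ) + 2) = 1)).card := by
    have a := sum_pm _ hfp
    have b := sum_pm _ hfq
    rw [hsums, b] at a
    have : ((univ.filter (fun i : Fin n => ε * l ((i : ℕ) + 2) = 1)).card : ℝ)
        = ((univ.filter (fun i : Fin n => l' ((i : ℕ) + 2) = 1)).card : ℝ) := by linarith
    exact_mod_cast this
  set p : Fin n → Prop := fun i => ε * l ((i : ℕ) + 2) = 1 with hp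
  set q : Fin n → Prop := fun i => l' ((i : ℕ) + 2) = 1 with hq
  have hcard1 : Fintype.card {i // p i} = Fintype.card {i // q i} := by
    rw [Fintype.card_subtype, Fintype.card_subtype]
    exact hcard
  have hcard2 : Fintype.card {i // ¬ p i} = Fintype.card {i // ¬ q i} := by
    rw [Fintype.card_subtype_compl, Fintype.card_subtype_compl, hcard1]
  let e : {i // p i} ≃ {i // q i} := Fintype.equivOfCardEq hcard1
  let f : {i // ¬ p i} ≃ {i // ¬ q i} := Fintype.equivOfCardEq hcard2
  let τ : Equiv.Perm (Fin n) := Equiv.subtypeCongr e f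
  have hτq : ∀ i, q (τ i) ↔ p i := by
    intro i
    by_cases h : p i
    · have h1 : τ i = (e ⟨i, h⟩ : {x // q x}) := by
        simp only [τ, Equiv.subtypeCongr, Equiv.trans_apply, Equiv.sumCongr_apply]
        rw [Equiv.sumCompl_symm_apply_of_pos h]
        rfl
      rw [h1]
      exact iff_of_true (e ⟨i, h⟩).2 h
    · have h1 : τ i = (f ⟨i, h⟩ : {x // ¬ q x}) := by
        simp only [τ, Equiv.subtypeCongr, Equiv.trans_apply, Equiv.sumCongr_apply]
        rw [Equiv.sumCompl_symm_apply_of_neg h]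
        rfl
      rw [h1]
      exact iff_of_false (f ⟨i, h⟩).2 h
  have hτ : ∀ i : Fin n, l' ((τ i : ℕ) + 2) = ε * l ((i : ℕ) + 2) := by
    intro i
    by_cases h : p i
    · have h1 : q (τ i) := (hτq i).mpr h
      rw [h1, h]
    · have h1 : ¬ q (τ i) := fun hq' => h ((hτq i).mp hq')
      have h2 := (hfq (τ i)).resolve_left h1
      have h3 := (hfp i).resolve_left h
      rw [h2, h3]
  have hoddn : Odd n := by
    rcases hNe with ⟨k, hk⟩
    exact ⟨k - 1, by omega⟩
  rcases hεpm with hE | hE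
  · refine ⟨(τ⁻¹).permMatrix ℤ, ⟨τ⁻¹, Or.inl rfl⟩, ?_, ?_⟩
    · rw [Matrix.det_permutation]
      rcases Int.units_eq_one_or (Equiv.Perm.sign τ⁻¹) with h | h <;> simp [h]
    · apply image_facet l l' ε τ hτ hc
      intro v j
      rw [permMatrix_cast_mulVec, hE, one_mul]
  · refine ⟨-((τ⁻¹).permMatrix ℤ), ⟨τ⁻¹, Or.inr rfl⟩, ?_, ?_⟩
    · rw [Matrix.det_neg, Matrix.det_permutation]
      have hcn : Fintype.card (Fin n) = n := Fintype.card_fin n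
      rw [hcn, hoddn.neg_one_pow]
      rcases Int.units_eq_one_or (Equiv.Perm.sign τ⁻¹) with h | h <;> simp [h]
    · apply image_facet l l' ε τ hτ hc
      intro v j
      have hmap : ((-((τ⁻¹).permMatrix ℤ)).map (fun z : ℤ => (z : ℝ)))
          = -(((τ⁻¹).permMatrix ℤ).map (fun z : ℤ => (z : ℝ))) := by
        ext i j; simp
      rw [hmap, Matrix.neg_mulVec, Pi.neg_apply, permMatrix_cast_mulVec, hE]
      ring
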